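/- Let K be a compact connected Lie group with maximal torus T. The commutator map ψ : T × K → [K,K], (λ, h) ↦ λ h λ⁻¹ h⁻¹, is surjective onto the commutator subgroup. In particular for K = SU(2) and T the diagonal torus, every element of SU(2) is of the form λ h λ⁻¹ h⁻¹ with λ ∈ T. -/

import Mathlib

open Complex Matrix ComplexConjugate

set_option maxHeartbeats 2000000 in
/-- Surjectivity of the commutator map `ψ : T × K → [K,K]` for a maximal torus `T`, in the
case `K = SU(2)` with `T` the diagonal torus: every `k ∈ SU(2)` equals `λ h λ⁻¹ h⁻¹` with
`λ` diagonal.  Here `SU(2)` is realized as the elements of the unitary group `U(2)` of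
determinant one. -/
theorem stmt15 :
    ∀ k : Matrix.unitaryGroup (Fin 2) ℂ, (k : Matrix (Fin 2) (Fin 2) ℂ).det = 1 →
      ∃ lam h : Matrix.unitaryGroup (Fin 2) ℂ,
        (lam : Matrix (Fin 2) (Fin 2) ℂ).det = 1 ∧
          (h : Matrix (Fin 2) (Fin 2) ℂ).det = 1 ∧
          (lam : Matrix (Fin 2) (Fin 2) ℂ) 0 1 = 0 ∧
          (lam : Matrix (Fin 2) (Fin 2) ℂ) 1 0 = 0 ∧
          lam * h * lam⁻¹ * h⁻¹ = k := by
  intro k hdet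
  have hk : star (k : Matrix (Fin 2) (Fin 2) ℂ) * k = 1 := k.2.1
  have h2 : (k : Matrix (Fin 2) (Fin 2) ℂ) * (k : Matrix (Fin 2) (Fin 2) ℂ).adjugate = 1 := by
    rw [Matrix.mul_adjugate, hdet, one_smul]
  have hadj : star (k : Matrix (Fin 2) (Fin 2) ℂ) = (k : Matrix (Fin 2) (Fin 2) ℂ).adjugate := by
    calc star (k : Matrix (Fin 2) (Fin 2) ℂ)
        = star (k : Matrix (Fin 2) (Fin 2) ℂ) * ((k : Matrix (Fin 2) (Fin 2) ℂ) * (k : Matrix (Fin 2) (Fin 2) ℂ).adjugate) := by rw [h2, mul_one]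
      _ = (k : Matrix (Fin 2) (Fin 2) ℂ).adjugate := by rw [← mul_assoc, hk, one_mul]
  set α := (k : Matrix (Fin 2) (Fin 2) ℂ) 0 0 with hα
  set β := (k : Matrix (Fin 2) (Fin 2) ℂ) 1 0 with hβ
  have h11 : (k : Matrix (Fin 2) (Fin 2) ℂ) 1 1 = conj α := by
    have := congrFun (congrFun hadj 0) 0
    rw [Matrix.adjugate_fin_two] at this
    simpa [Matrix.star_apply] using this.symm
  have h01 : (k : Matrix (Fin 2) (Fin 2) ℂ) 0 1 = -conj β := by
    have := congrFun (congrFun hadj 0) 1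
    rw [Matrix.adjugate_fin_two] at this
    simp [Matrix.star_apply] at this
    linear_combination this
  have hnorm : α * conj α + β * conj β = 1 := by
    have hd := hdet
    rw [Matrix.det_fin_two] at hd
    rw [h11, h01] at hd
    linear_combination hd
  by_cases hα1 : α = 1
  · -- k = 1
    have hβ0 : β = 0 := by
      have h : β * conj β = 0 := by
        rw [hα1] at hnorm; simpa using hnorm
      rw [Complex.mul_conj] at h
      exact_mod_cast Complex.normSq_eq_zero.mp (by exact_mod_cast h)
    have hk1 : (k : Matrix (Fin 2) (Fin 2) ℂ) = 1 := by
      ext i j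
      fin_cases i <;> fin_cases j <;>
        simp [Matrix.one_apply, ← hα, ← hβ, h11, h01, hα1, hβ0]
    refine ⟨1, 1, by simp, by simp, by simp, by simp, ?_⟩
    have : (1 : Matrix.unitaryGroup (Fin 2) ℂ) = k := Subtype.ext hk1.symm
    simpa using this
  · -- main case
    have hns : Complex.normSq α + Complex.normSq β = 1 := by
      have := hnorm
      rw [Complex.mul_conj, Complex.mul_conj] at this
      exact_mod_cast this
    have hre : α.re < 1 := by
      rcases lt_or_ge α.re 1 with h | h
      · exact h
      · exfalso
        have h1 : Complex.normSq α ≤ 1 := by nlinarith [Complex.normSq_nonneg β]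
        rw [Complex.normSq_apply] at h1
        have him : α.im = 0 := by nlinarith
        have hre1 : α.re = 1 := by nlinarith
        exact hα1 (by apply Complex.ext <;> simp [him, hre1])
    set t : ℝ := 2 - 2*α.re with ht
    have htpos : 0 < t := by simp [ht]; linarith
    set s : ℝ := Real.sqrt t with hsdef
    have hspos : 0 < s := Real.sqrt_pos.mpr htpos
    have hs0 : (s : ℂ) ≠ 0 := by exact_mod_cast hspos.ne'
    have hs2 : (s : ℂ)^2 = (α - 1) * (conj α - 1) + β * conj β := by
      have h1 : s^2 = t := Real.sq_sqrt htpos.le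
      have h2 : (α : ℂ) + conj α = 2*α.re := by push_cast [Complex.add_conj]; ring
      have h3 : ((s:ℝ)^2 : ℂ) = ((t:ℝ) : ℂ) := by exact_mod_cast congrArg (fun x : ℝ => (x:ℂ)) h1
      push_cast [ht] at h3
      push_cast
      rw [h3]
      linear_combination h2 - hnorm
    set r : ℝ := Real.sqrt (Complex.normSq (α - 1)) with hrdef
    have hrpos : 0 < r := Real.sqrt_pos.mpr (by
      have : α - 1 ≠ 0 := sub_ne_zero.mpr hα1
      exact Complex.normSq_pos.mpr this)
    have hr0 : (r : ℂ) ≠ 0 := by exact_mod_cast hrpos.ne'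
    have hr2 : (r : ℂ)^2 = (α - 1) * (conj α - 1) := by
      have h1 : r^2 = Complex.normSq (α - 1) := Real.sq_sqrt (Complex.normSq_nonneg _)
      have h3 : ((r:ℝ)^2 : ℂ) = ((Complex.normSq (α-1) : ℝ) : ℂ) := by exact_mod_cast congrArg (fun x : ℝ => (x:ℂ)) h1
      rw [← Complex.mul_conj (α - 1)] at h3
      push_cast at h3 ⊢
      rw [h3]
      simp [map_sub]
    set w : ℂ := Complex.I * (α - 1) / r with hwdef
    have hcw : conj w = -Complex.I * (conj α - 1) / r := by
      simp [hwdef, map_div₀, Complex.conj_I, Complex.conj_ofReal, map_sub]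
      try ring
    have hww : w * conj w = 1 := by
      rw [hcw, hwdef]
      field_simp
      linear_combination (-(conj α) + 1) * (α - 1) * Complex.I_sq - hr2
    set L : Matrix (Fin 2) (Fin 2) ℂ := !![w, 0; 0, conj w] with hLdef
    set H : Matrix (Fin 2) (Fin 2) ℂ := !![conj β / s, (1 - conj α)/s; (α-1)/s, β/s] with hHdef
    have hLstar : star L = !![conj w, 0; 0, w] := by
      ext i j
      fin_cases i <;> fin_cases j <;> simp [hLdef, Matrix.star_apply]
    have hHstar : star H = !![β / s, (conj α - 1)/s; (1 - α)/s, conj β/s] := by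
      ext i j
      fin_cases i <;> fin_cases j <;>
        simp [hHdef, Matrix.star_apply, map_div₀, map_sub, Complex.conj_ofReal] <;> try ring
    have hw2 : w^2 * (conj α - 1) = -(α - 1) := by
      rw [hwdef]
      field_simp
      linear_combination ((α-1)*((starRingEnd ℂ) α - 1)) * Complex.I_sq + hr2
    have hcw2 : (conj w)^2 * (α - 1) = -(conj α - 1) := by
      rw [hcw]
      field_simp
      linear_combination (((starRingEnd ℂ) α - 1)^2*(α-1)) * Complex.I_sq + ((starRingEnd ℂ) α - 1)*hr2
    clear_value w s r t
    have hL1 : L * star L = 1 := by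
      rw [hLstar, hLdef]
      ext i j
      fin_cases i <;> fin_cases j <;>
        simp [Matrix.mul_apply, Fin.sum_univ_two, Matrix.one_apply] <;>
        linear_combination hww
    have hH1 : H * star H = 1 := by
      rw [hHstar, hHdef]
      ext i j
      fin_cases i <;> fin_cases j <;>
        simp [Matrix.mul_apply, Fin.sum_univ_two, Matrix.one_apply] <;>
        field_simp [hs0] <;>
        first
          | linear_combination hs2
          | linear_combination 2*hs2
          | linear_combination -hs2
          | linear_combination (-2)*hs2
          | ring
    have hLmem : L ∈ Matrix.unitaryGroup (Fin 2) ℂ := Matrix.mem_unitaryGroup_iff.mpr hL1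
    have hHmem : H ∈ Matrix.unitaryGroup (Fin 2) ℂ := Matrix.mem_unitaryGroup_iff.mpr hH1
    have hdetL : L.det = 1 := by
      rw [hLdef, Matrix.det_fin_two_of]
      linear_combination hww
    have hdetH : H.det = 1 := by
      rw [hHdef, Matrix.det_fin_two_of]
      field_simp [hs0]
      first
        | linear_combination hs2
        | linear_combination 2*hs2
        | linear_combination -hs2
        | linear_combination (-2)*hs2
    have hL01 : L 0 1 = 0 := by rw [hLdef]; simp
    have hL10 : L 1 0 = 0 := by rw [hLdef]; simp
    have hkent : (k : Matrix (Fin 2) (Fin 2) ℂ) = !![α, -conj β; β, conj α] := by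
      ext i j
      fin_cases i <;> fin_cases j <;> simp [← hα, ← hβ, h11, h01]
    have key : L * H * star L = (k : Matrix (Fin 2) (Fin 2) ℂ) * H := by
      rw [hLstar, hLdef, hHdef, hkent]
      ext i j
      fin_cases i <;> fin_cases j <;>
        simp [Matrix.mul_apply, Fin.sum_univ_two] <;>
        field_simp [hs0] <;>
        first
          | linear_combination (starRingEnd ℂ) β * hww
          | linear_combination β * hww
          | linear_combination -hw2 + hnorm
          | linear_combination hcw2 - hnorm
    have final : L * H * star L * star H = (k : Matrix (Fin 2) (Fin 2) ℂ) := by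
      rw [key, mul_assoc, hH1, mul_one]
    refine ⟨⟨L, hLmem⟩, ⟨H, hHmem⟩, hdetL, hdetH, hL01, hL10, ?_⟩
    apply Subtype.ext
    exact final
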